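/- Interpolation inequality for the y-iterates (appendix lemma, eq. (C1)). Under the stated hypotheses, −‖y⁺ − y*‖² ≤ ((1 − ϑ₁)/ϑ₁)‖y_f − y*‖² − (1/ϑ₂)‖y_f⁺ − y*‖² − (1/ϑ₁ − 1/ϑ₂)‖y_g − y*‖² + (ϑ₂ − ϑ₁)‖y⁺ − y‖². -/

import Mathlib

open RealInnerProductSpace

/-- Interpolation inequality for the y-iterates (appendix lemma, eq. (C1)).
Let `H` be a real inner product space, `0 < ϑ₁ ≤ 1`, `ϑ₁ ≤ ϑ₂`,
`y_g := ϑ₁ y + (1 − ϑ₁) y_f` and `y_f⁺ := y_g + ϑ₂(y⁺ − y)`.  Then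
`−‖y⁺ − y*‖² ≤ ((1 − ϑ₁)/ϑ₁)‖y_f − y*‖² − (1/ϑ₂)‖y_f⁺ − y*‖²
  − (1/ϑ₁ − 1/ϑ₂)‖y_g − y*‖² + (ϑ₂ − ϑ₁)‖y⁺ − y‖²`. -/
theorem y_interpolation_inequality
    {H : Type*} [NormedAddCommGroup H] [InnerProductSpace ℝ H]
    (ϑ₁ ϑ₂ : ℝ) (hϑ₁pos : 0 < ϑ₁) (hϑ₁le : ϑ₁ ≤ 1) (hϑ : ϑ₁ ≤ ϑ₂)
    (y yf yplus ystar : H)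
    (yg : H) (hyg : yg = ϑ₁ • y + (1 - ϑ₁) • yf)
    (yfplus : H) (hyfplus : yfplus = yg + ϑ₂ • (yplus - y)) :
    -‖yplus - ystar‖ ^ 2 ≤
      ((1 - ϑ₁) / ϑ₁) * ‖yf - ystar‖ ^ 2 - (1 / ϑ₂) * ‖yfplus - ystar‖ ^ 2
        - (1 / ϑ₁ - 1 / ϑ₂) * ‖yg - ystar‖ ^ 2 + (ϑ₂ - ϑ₁) * ‖yplus - y‖ ^ 2 := by
  have h1 : ϑ₁ ≠ 0 := ne_of_gt hϑ₁pos
  have h2 : ϑ₂ ≠ 0 := ne_of_gt (lt_of_lt_of_le hϑ₁pos hϑ)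
  subst hyg hyfplus
  have key :
      ((1 - ϑ₁) / ϑ₁) * ‖yf - ystar‖ ^ 2
        - (1 / ϑ₂) * ‖ϑ₁ • y + (1 - ϑ₁) • yf + ϑ₂ • (yplus - y) - ystar‖ ^ 2
        - (1 / ϑ₁ - 1 / ϑ₂) * ‖ϑ₁ • y + (1 - ϑ₁) • yf - ystar‖ ^ 2
        + (ϑ₂ - ϑ₁) * ‖yplus - y‖ ^ 2 + ‖yplus - ystar‖ ^ 2
      = (1 - ϑ₁) * ‖yf - yplus‖ ^ 2 := by
    simp only [← real_inner_self_eq_norm_sq]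
    simp only [inner_sub_left, inner_sub_right, inner_add_left, inner_add_right,
      inner_smul_left, inner_smul_right, real_inner_comm y yf, real_inner_comm y yplus,
      real_inner_comm y ystar, real_inner_comm yf yplus, real_inner_comm yf ystar,
      real_inner_comm yplus ystar, RCLike.ofReal_real_eq_id, id_eq, conj_trivial]
    field_simp
    ring
  have hnn : 0 ≤ (1 - ϑ₁) * ‖yf - yplus‖ ^ 2 :=
    mul_nonneg (by linarith) (sq_nonneg _)
  linarith [key]
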